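/- For π an affine signed permutation and ℓ_a the loop permutation sending i to i+2n if i ≡ a (mod 2n), i to i-2n if i ≡ -a (mod 2n), and fixing all other integers (where a is an integer with a ≢ 0 mod n), the quantity #big(π∘ℓ_a) differs from #big(π) by exactly 1, and #neg(π∘ℓ_a) differs from #neg(π) by exactly 1. -/

import Mathlib

def IsAffineSigned (n : ℤ) (π : Equiv.Perm ℤ) : Prop :=
  (∀ i : ℤ, π (i + 2 * n) = π i + 2 * n) ∧ (∀ i : ℤ, π (-i) = -π i)

def negSet (π : Equiv.Perm ℤ) : Set ℤ := {i : ℤ | 0 < i ∧ π i < 0}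

def bigSet (n : ℤ) (π : Equiv.Perm ℤ) : Set ℤ := {i : ℤ | i < n ∧ n < π i}

/-- The underlying function of the loop `ℓ_a`: sends `i ↦ i + 2n` if `i ≡ a (mod 2n)`,
`i ↦ i - 2n` if `i ≡ -a (mod 2n)`, and fixes all other integers. -/
def loopFun (n a i : ℤ) : ℤ :=
  if (2 * n) ∣ (i - a) then i + 2 * n
  else if (2 * n) ∣ (i + a) then i - 2 * n
  else i

namespace LoopAux

lemma shift_key {n : ℤ} {π : Equiv.Perm ℤ} (h1 : ∀ i : ℤ, π (i + 2*n) = π i + 2*n)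
    (k i : ℤ) : π (i + 2*n*k) = π i + 2*n*k := by
  induction k using Int.induction_on with
  | zero => simp
  | succ m ih =>
      have e : i + 2*n*((m:ℤ)+1) = (i + 2*n*m) + 2*n := by ring
      rw [e, h1, ih]; ring
  | pred m ih =>
      have e : i + 2*n*(-(m:ℤ)) = (i + 2*n*(-(m:ℤ)-1)) + 2*n := by ring
      rw [e, h1] at ih
      have h : π (i + 2*n*(-(m:ℤ)-1)) = π i + 2*n*(-(m:ℤ)-1) := by linarith
      exact h

lemma shift {n : ℤ} {π : Equiv.Perm ℤ} (h1 : ∀ i : ℤ, π (i + 2*n) = π i + 2*n)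
    {i j : ℤ} (h : 2*n ∣ (i - j)) : π i = π j + (i - j) := by
  obtain ⟨k, hk⟩ := h
  have e : i = j + 2*n*k := by linarith
  rw [e, shift_key h1]
  ring

lemma uniq {n : ℤ} {π : Equiv.Perm ℤ} (hn : 0 < n) (h1 : ∀ i : ℤ, π (i + 2*n) = π i + 2*n)
    {i j : ℤ} (hd : 2*n ∣ (i - j)) (hu : π i - π j < 2*n) (hl : π j - π i < 2*n) : i = j := by
  have hs := shift h1 hd
  obtain ⟨k, hk⟩ := hd
  have hk0 : k = 0 := by
    rcases lt_trichotomy k 0 with h | h | h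
    · exfalso; nlinarith
    · exact h
    · exfalso; nlinarith
  rw [hk0] at hk
  linarith

lemma window {m : ℤ} (hm : 0 < m) (t c : ℤ) : ∃ v, c ≤ v ∧ v < c + m ∧ m ∣ (v - t) := by
  refine ⟨c + (t - c) % m, ?_, ?_, ?_⟩
  · have := Int.emod_nonneg (t - c) hm.ne'
    linarith
  · have := Int.emod_lt_of_pos (t - c) hm
    linarith
  · have e : c + (t - c) % m - t = -(m * ((t - c) / m)) := by
      rw [Int.emod_def]; ring
    rw [e]
    exact dvd_neg.mpr (dvd_mul_right m _)

lemma dvd_nonpos {m d : ℤ} (hm : 0 < m) (h : m ∣ d) (hd : d < m) : d ≤ 0 := by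
  obtain ⟨k, rfl⟩ := h
  rcases le_or_gt k 0 with h | h
  · exact mul_nonpos_of_nonneg_of_nonpos hm.le h
  · nlinarith

lemma dvd_nonneg {m d : ℤ} (hm : 0 < m) (h : m ∣ d) (hd : -m < d) : 0 ≤ d := by
  obtain ⟨k, rfl⟩ := h
  rcases le_or_gt 0 k with h | h
  · exact mul_nonneg hm.le h
  · nlinarith

lemma bigSet_finite {n : ℤ} {π : Equiv.Perm ℤ} (hn : 0 < n)
    (h1 : ∀ i : ℤ, π (i + 2*n) = π i + 2*n) : (bigSet n π).Finite := by
  have h2n : (0:ℤ) < 2*n := by linarith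
  have hne : (Finset.Ico (0:ℤ) (2*n)).Nonempty := Finset.nonempty_Ico.2 h2n
  set C := (Finset.Ico (0:ℤ) (2*n)).sup' hne π with hC
  have key : bigSet n π ⊆ π ⁻¹' (Set.Ioc n C) := by
    rintro i ⟨hi, hgt⟩
    have hr0 : 0 ≤ i % (2*n) := Int.emod_nonneg i h2n.ne'
    have hr1 : i % (2*n) < 2*n := Int.emod_lt_of_pos i h2n
    have hd : 2*n ∣ i - i % (2*n) := by
      refine ⟨i / (2*n), ?_⟩
      rw [Int.emod_def]; ring
    have hs := shift h1 hd
    have hnp : i - i % (2*n) ≤ 0 := dvd_nonpos h2n hd (by linarith)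
    have hle : π (i % (2*n)) ≤ C := Finset.le_sup' π (Finset.mem_Ico.2 ⟨hr0, hr1⟩)
    exact ⟨hgt, by linarith⟩
  exact Set.Finite.subset (Set.Finite.preimage π.injective.injOn (Set.finite_Ioc n C)) key

lemma negSet_finite {n : ℤ} {π : Equiv.Perm ℤ} (hn : 0 < n)
    (h1 : ∀ i : ℤ, π (i + 2*n) = π i + 2*n) : (negSet π).Finite := by
  have h2n : (0:ℤ) < 2*n := by linarith
  have hne : (Finset.Ico (0:ℤ) (2*n)).Nonempty := Finset.nonempty_Ico.2 h2n
  set C := (Finset.Ico (0:ℤ) (2*n)).inf' hne π with hC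
  have key : negSet π ⊆ π ⁻¹' (Set.Ico C 0) := by
    rintro i ⟨hi, hlt⟩
    have hr0 : 0 ≤ i % (2*n) := Int.emod_nonneg i h2n.ne'
    have hr1 : i % (2*n) < 2*n := Int.emod_lt_of_pos i h2n
    have hd : 2*n ∣ i - i % (2*n) := by
      refine ⟨i / (2*n), ?_⟩
      rw [Int.emod_def]; ring
    have hs := shift h1 hd
    have hnn : 0 ≤ i - i % (2*n) := dvd_nonneg h2n hd (by linarith)
    have hle : C ≤ π (i % (2*n)) := Finset.inf'_le π (Finset.mem_Ico.2 ⟨hr0, hr1⟩)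
    exact ⟨by linarith, hlt⟩
  exact Set.Finite.subset (Set.Finite.preimage π.injective.injOn (Set.finite_Ico C 0)) key

lemma ncard_insert_abs {s : Set ℤ} {x : ℤ} (hfin : s.Finite) (hx : x ∉ s) :
    |((insert x s).ncard : ℤ) - (s.ncard : ℤ)| = 1 := by
  rw [Set.ncard_insert_of_notMem hx hfin]
  push_cast
  rw [add_sub_cancel_left, abs_one]

lemma ncard_diff_abs {s : Set ℤ} {x : ℤ} (hfin : s.Finite) (hx : x ∈ s) :
    |((s \ {x}).ncard : ℤ) - (s.ncard : ℤ)| = 1 := by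
  rw [Set.ncard_diff_singleton_of_mem hx]
  have h1 : 1 ≤ s.ncard := (Set.ncard_pos hfin).2 ⟨x, hx⟩
  rw [Nat.cast_sub h1]
  push_cast
  rw [show ((s.ncard : ℤ) - 1) - (s.ncard : ℤ) = -1 by ring, abs_neg, abs_one]

end LoopAux

/-- Multiplying an affine signed permutation on the right by a loop `ℓ_a` changes
both `#big` and `#neg` by exactly one. -/
theorem loop_changes_big_neg_by_one (n a : ℤ) (hn : 2 ≤ n) (ha0 : 0 < a) (han : a < n)
    (π ℓ : Equiv.Perm ℤ) (hπ : IsAffineSigned n π) (hℓ : ∀ i, ℓ i = loopFun n a i) :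
    |((bigSet n (π * ℓ)).ncard : ℤ) - ((bigSet n π).ncard : ℤ)| = 1 ∧
    |((negSet (π * ℓ)).ncard : ℤ) - ((negSet π).ncard : ℤ)| = 1 := by
  obtain ⟨h1, h2⟩ := hπ
  have hn0 : (0:ℤ) < n := by linarith
  have h2n : (0:ℤ) < 2*n := by linarith
  have hdn : ∀ i : ℤ, π (i - 2*n) = π i - 2*n := by
    intro i
    have := h1 (i - 2*n)
    rw [show i - 2*n + 2*n = i by ring] at this
    linarith
  have hPL : ∀ i : ℤ, (π * ℓ) i =
      if 2*n ∣ i - a then π i + 2*n else if 2*n ∣ i + a then π i - 2*n else π i := by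
    intro i
    rw [Equiv.Perm.mul_apply, hℓ]
    unfold loopFun
    split_ifs with hA hB
    · exact h1 i
    · exact hdn i
    · rfl
  have hAB : ∀ i : ℤ, 2*n ∣ i - a → 2*n ∣ i + a → False := by
    intro i hA hB
    have hd := dvd_sub hB hA
    rw [show i + a - (i - a) = 2*a by ring] at hd
    have h2a : (0:ℤ) < 2*a := by linarith
    have := Int.le_of_dvd h2a hd
    linarith
  set p := π a with hp
  have hπ0 : π 0 = 0 := by
    have := h2 0
    rw [neg_zero] at this
    linarith
  have hπn : π n = n := by
    have e1 := h1 (-n)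
    rw [show -n + 2*n = n by ring] at e1
    have e2 := h2 n
    linarith
  have hp0 : p ≠ 0 := by
    intro h
    have h3 : π a = π 0 := by rw [← hp, h, hπ0]
    have := π.injective h3
    omega
  have hpn : p ≠ -n := by
    intro h
    have h3 : π a = π (-n) := by rw [← hp, h, h2 n, hπn]
    have := π.injective h3
    omega
  have hclA : ∀ i : ℤ, 2*n ∣ i - a → π i = p + (i - a) := by
    intro i h
    rw [hp]
    exact LoopAux.shift h1 h
  have hclB : ∀ i : ℤ, 2*n ∣ i + a → π i = -p + (i + a) := by
    intro i h
    have hd : 2*n ∣ i - (-a) := by rw [sub_neg_eq_add]; exact h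
    have hs := LoopAux.shift h1 hd
    rw [h2 a] at hs
    rw [hp]
    linarith [hs]
  have hfinB : (bigSet n π).Finite := LoopAux.bigSet_finite hn0 h1
  have hfinN : (negSet π).Finite := LoopAux.negSet_finite hn0 h1
  constructor
  · -- bigSet part
    rcases lt_or_gt_of_ne hpn with hcase | hcase
    · -- p < -n : remove an element
      obtain ⟨w, hw1, hw2, hw3⟩ := LoopAux.window h2n (-p) (n+1)
      have hw2' : w ≤ 3*n := by omega
      have hw3' : 2*n ∣ w + p := by rw [sub_neg_eq_add] at hw3; exact hw3
      set y := -a + (w + p) with hy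
      have hyB : 2*n ∣ y + a := by
        rw [show y + a = w + p by rw [hy]; ring]; exact hw3'
      have hπy : π y = w := by
        rw [hclB y hyB, show y + a = w + p by rw [hy]; ring]; ring
      have hyn : y < n := by
        have hle : w + p ≤ 0 := LoopAux.dvd_nonpos h2n hw3' (by linarith)
        linarith
      have hymem : y ∈ bigSet n π := ⟨hyn, by rw [hπy]; linarith⟩
      have hset : bigSet n (π * ℓ) = bigSet n π \ {y} := by
        ext i
        simp only [bigSet, Set.mem_setOf_eq, Set.mem_diff, Set.mem_singleton_iff, hPL i]
        split_ifs with hA hB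
        · constructor
          · rintro ⟨hi, hgt⟩
            exfalso
            have h3 := hclA i hA
            have h4 : i - a ≤ 0 := LoopAux.dvd_nonpos h2n hA (by linarith)
            linarith
          · rintro ⟨⟨hi, hgt⟩, -⟩
            exfalso
            have h3 := hclA i hA
            have h4 : i - a ≤ 0 := LoopAux.dvd_nonpos h2n hA (by linarith)
            linarith
        · constructor
          · rintro ⟨hi, hgt⟩
            refine ⟨⟨hi, by linarith⟩, ?_⟩
            intro hiy
            rw [hiy, hπy] at hgt
            linarith
          · rintro ⟨⟨hi, hgt⟩, hne⟩
            refine ⟨hi, ?_⟩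
            by_contra hle
            push_neg at hle
            apply hne
            refine LoopAux.uniq hn0 h1 ?_ ?_ ?_
            · have hd := dvd_sub hB hyB
              rw [show i + a - (y + a) = i - y by ring] at hd
              exact hd
            · rw [hπy]; linarith
            · rw [hπy]; linarith
        · constructor
          · rintro ⟨hi, hgt⟩
            exact ⟨⟨hi, hgt⟩, fun hiy => hB (hiy ▸ hyB)⟩
          · rintro ⟨⟨hi, hgt⟩, -⟩
            exact ⟨hi, hgt⟩
      rw [hset]
      exact LoopAux.ncard_diff_abs hfinB hymem
    · -- -n < p : insert an element
      obtain ⟨v, hv1, hv2, hv3⟩ := LoopAux.window h2n p (-n+1)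
      have hv2' : v ≤ n := by omega
      have hcase' : -n + 1 ≤ p := by omega
      set x := a + (v - p) with hx
      have hxA : 2*n ∣ x - a := by
        rw [show x - a = v - p by rw [hx]; ring]; exact hv3
      have hπx : π x = v := by
        rw [hclA x hxA, show x - a = v - p by rw [hx]; ring]; ring
      have hxn : x < n := by
        have hle : v - p ≤ 0 := LoopAux.dvd_nonpos h2n hv3 (by linarith)
        linarith
      have hxnot : x ∉ bigSet n π := by
        rintro ⟨-, hgt⟩
        rw [hπx] at hgt
        linarith
      have hset : bigSet n (π * ℓ) = insert x (bigSet n π) := by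
        ext i
        simp only [bigSet, Set.mem_setOf_eq, Set.mem_insert_iff, hPL i]
        split_ifs with hA hB
        · constructor
          · rintro ⟨hi, hgt⟩
            rcases lt_or_ge n (π i) with h | h
            · exact Or.inr ⟨hi, h⟩
            · left
              refine LoopAux.uniq hn0 h1 ?_ ?_ ?_
              · have hd := dvd_sub hA hxA
                rw [show i - a - (x - a) = i - x by ring] at hd
                exact hd
              · rw [hπx]; linarith
              · rw [hπx]; linarith
          · rintro (rfl | ⟨hi, hgt⟩)
            · exact ⟨hxn, by rw [hπx]; linarith⟩
            · exact ⟨hi, by linarith⟩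
        · constructor
          · rintro ⟨hi, hgt⟩
            exact Or.inr ⟨hi, by linarith⟩
          · rintro (rfl | ⟨hi, hgt⟩)
            · exact (hA hxA).elim
            · exfalso
              have h3 := hclB i hB
              have h4 : i + a ≤ 0 := LoopAux.dvd_nonpos h2n hB (by linarith)
              linarith
        · constructor
          · rintro ⟨hi, hgt⟩
            exact Or.inr ⟨hi, hgt⟩
          · rintro (rfl | h)
            · exact (hA hxA).elim
            · exact h
      rw [hset]
      exact LoopAux.ncard_insert_abs hfinB hxnot
  · -- negSet part
    rcases lt_or_gt_of_ne hp0 with hcase | hcase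
    · -- p < 0 : remove an element
      obtain ⟨w, hw1, hw2, hw3⟩ := LoopAux.window h2n p (-(2*n))
      have hw2' : w ≤ -1 := by omega
      have hcase' : p ≤ -1 := by omega
      set x := a + (w - p) with hx
      have hxA : 2*n ∣ x - a := by
        rw [show x - a = w - p by rw [hx]; ring]; exact hw3
      have hπx : π x = w := by
        rw [hclA x hxA, show x - a = w - p by rw [hx]; ring]; ring
      have hx0 : 0 < x := by
        have hge : 0 ≤ w - p := LoopAux.dvd_nonneg h2n hw3 (by linarith)
        linarith
      have hxmem : x ∈ negSet π := ⟨hx0, by rw [hπx]; linarith⟩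
      have hset : negSet (π * ℓ) = negSet π \ {x} := by
        ext i
        simp only [negSet, Set.mem_setOf_eq, Set.mem_diff, Set.mem_singleton_iff, hPL i]
        split_ifs with hA hB
        · constructor
          · rintro ⟨hi, hlt⟩
            refine ⟨⟨hi, by linarith⟩, ?_⟩
            intro hix
            rw [hix, hπx] at hlt
            linarith
          · rintro ⟨⟨hi, hlt⟩, hne⟩
            refine ⟨hi, ?_⟩
            by_contra hge
            push_neg at hge
            apply hne
            refine LoopAux.uniq hn0 h1 ?_ ?_ ?_
            · have hd := dvd_sub hA hxA
              rw [show i - a - (x - a) = i - x by ring] at hd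
              exact hd
            · rw [hπx]; linarith
            · rw [hπx]; linarith
        · constructor
          · rintro ⟨hi, hlt⟩
            exfalso
            have h3 := hclB i hB
            have h4 : 2*n ≤ i + a := Int.le_of_dvd (by linarith) hB
            linarith
          · rintro ⟨⟨hi, hlt⟩, -⟩
            exfalso
            have h3 := hclB i hB
            have h4 : 2*n ≤ i + a := Int.le_of_dvd (by linarith) hB
            linarith
        · constructor
          · rintro ⟨hi, hlt⟩
            exact ⟨⟨hi, hlt⟩, fun hix => hA (hix ▸ hxA)⟩
          · rintro ⟨⟨hi, hlt⟩, -⟩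
            exact ⟨hi, hlt⟩
      rw [hset]
      exact LoopAux.ncard_diff_abs hfinN hxmem
    · -- 0 < p : insert an element
      obtain ⟨v, hv1, hv2, hv3⟩ := LoopAux.window h2n (-p) 0
      have hv2' : v ≤ 2*n - 1 := by omega
      have hcase' : 1 ≤ p := by omega
      have hv3' : 2*n ∣ v + p := by rw [sub_neg_eq_add] at hv3; exact hv3
      set y := -a + (v + p) with hy
      have hyB : 2*n ∣ y + a := by
        rw [show y + a = v + p by rw [hy]; ring]; exact hv3'
      have hπy : π y = v := by
        rw [hclB y hyB, show y + a = v + p by rw [hy]; ring]; ring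
      have hy0 : 0 < y := by
        have hge : 2*n ≤ v + p := Int.le_of_dvd (by linarith) hv3'
        linarith
      have hynot : y ∉ negSet π := by
        rintro ⟨-, hlt⟩
        rw [hπy] at hlt
        linarith
      have hset : negSet (π * ℓ) = insert y (negSet π) := by
        ext i
        simp only [negSet, Set.mem_setOf_eq, Set.mem_insert_iff, hPL i]
        split_ifs with hA hB
        · constructor
          · rintro ⟨hi, hlt⟩
            exfalso
            have h3 := hclA i hA
            have h4 : 0 ≤ i - a := LoopAux.dvd_nonneg h2n hA (by linarith)
            linarith
          · rintro (rfl | ⟨hi, hlt⟩)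
            · exact (hAB y hA hyB).elim
            · exfalso
              have h3 := hclA i hA
              have h4 : 0 ≤ i - a := LoopAux.dvd_nonneg h2n hA (by linarith)
              linarith
        · constructor
          · rintro ⟨hi, hlt⟩
            rcases lt_or_ge (π i) 0 with h | h
            · exact Or.inr ⟨hi, h⟩
            · left
              refine LoopAux.uniq hn0 h1 ?_ ?_ ?_
              · have hd := dvd_sub hB hyB
                rw [show i + a - (y + a) = i - y by ring] at hd
                exact hd
              · rw [hπy]; linarith
              · rw [hπy]; linarith
          · rintro (rfl | ⟨hi, hlt⟩)
            · exact ⟨hy0, by rw [hπy]; linarith⟩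
            · exact ⟨hi, by linarith⟩
        · constructor
          · rintro ⟨hi, hlt⟩
            exact Or.inr ⟨hi, hlt⟩
          · rintro (rfl | h)
            · exact (hB hyB).elim
            · exact h
      rw [hset]
      exact LoopAux.ncard_insert_abs hfinN hynot
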